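/- Let d > 0, ρ > 0, and let L ≥ 2 be an integer. Let v₁, …, v_L be i.i.d. random variables following the Exponential(ρ) distribution. For l = 2, …, L define γ_l = (1/d)·log(1 + v_l/(v₁ + ⋯ + v_{l-1})). Then the random variables γ₂, …, γ_L are jointly independent, and for each l the variable γ_l follows the Exponential((l−1)·d) distribution; that is, the joint density of (γ₂,…,γ_L) factorizes as ∏_{l=2}^{L} (l−1)·d·exp(−(l−1)·d·γ_l) on (0,∞)^{L-1}. -/

import Mathlib

open MeasureTheory ProbabilityTheory Real Finset
open Set
open scoped ENNReal

namespace CrideAux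

lemma expMeasure_eq_withDensity (r : ℝ) :
    expMeasure r = volume.withDensity (exponentialPDF r) := rfl

lemma integral_exp_neg_mul_Ioi {b : ℝ} (hb : 0 < b) (a : ℝ) :
    ∫ x in Ioi a, Real.exp (-(b * x)) = Real.exp (-(b * a)) / b := by
  have h := integral_comp_mul_left_Ioi (fun x => Real.exp (-x)) a hb
  simp only [integral_exp_neg_Ioi, smul_eq_mul] at h
  rw [h, inv_mul_eq_div]

lemma lintegral_exp_neg_mul_expMeasure {r s : ℝ} (hr : 0 < r) (hs : 0 ≤ s) {a : ℝ} (ha : 0 ≤ a) :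
    ∫⁻ y in Ioi a, ENNReal.ofReal (Real.exp (-(s * y))) ∂(expMeasure r)
      = ENNReal.ofReal (r / (r + s) * Real.exp (-((r + s) * a))) := by
  have hrs : 0 < r + s := by linarith
  have hm : Measurable (exponentialPDF r) := (measurable_exponentialPDFReal r).ennreal_ofReal
  rw [expMeasure_eq_withDensity,
    setLIntegral_withDensity_eq_setLIntegral_mul _ hm (by fun_prop) measurableSet_Ioi]
  have hcongr : ∀ y ∈ Ioi a,
      (exponentialPDF r * fun y => ENNReal.ofReal (Real.exp (-(s * y)))) y
        = ENNReal.ofReal (r * Real.exp (-((r + s) * y))) := by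
    intro y hy
    have hy0 : 0 ≤ y := le_trans ha (le_of_lt hy)
    simp only [Pi.mul_apply, exponentialPDF_of_nonneg hy0]
    rw [← ENNReal.ofReal_mul (by positivity)]
    congr 1
    rw [mul_assoc, ← Real.exp_add]
    ring_nf
  rw [setLIntegral_congr_fun measurableSet_Ioi hcongr]
  have hint : IntegrableOn (fun y => r * Real.exp (-((r + s) * y))) (Ioi a) := by
    apply Integrable.const_mul
    have h := exp_neg_integrableOn_Ioi a hrs
    have he : (fun x => Real.exp (-(r+s)*x)) = (fun x => Real.exp (-((r+s)*x))) := by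
      funext x; ring_nf
    rwa [he] at h
  rw [← ofReal_integral_eq_lintegral_ofReal hint
    (Filter.Eventually.of_forall fun y => by positivity)]
  rw [MeasureTheory.integral_const_mul, integral_exp_neg_mul_Ioi hrs]
  congr 1
  field_simp

lemma expMeasure_Ioi {r : ℝ} (hr : 0 < r) (a : ℝ) :
    expMeasure r (Ioi a) = ENNReal.ofReal (Real.exp (-(r * max a 0))) := by
  have h0 : expMeasure r (Ioi (max a 0)) = ENNReal.ofReal (Real.exp (-(r * max a 0))) := by
    have := lintegral_exp_neg_mul_expMeasure hr le_rfl (le_max_right a 0)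
    simpa [setLIntegral_one, div_self hr.ne'] using this
  rcases le_or_gt 0 a with h | h
  · rwa [max_eq_left h] at h0 ⊢
  · rw [max_eq_right h.le] at h0 ⊢
    rw [← h0]
    have : expMeasure r (Ioi a) = expMeasure r (Ioc a 0) + expMeasure r (Ioi 0) := by
      rw [← measure_union Set.Ioc_disjoint_Ioi_same measurableSet_Ioi, Ioc_union_Ioi_eq_Ioi h.le]
    rw [this]
    have : expMeasure r (Ioc a 0) = 0 := by
      rw [expMeasure_eq_withDensity, withDensity_apply _ measurableSet_Ioc]
      have : ∀ y ∈ Ioc a (0:ℝ), exponentialPDF r y = Set.indicator {0} (fun _ => ENNReal.ofReal r) y := by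
        intro y hy
        rcases lt_or_eq_of_le hy.2 with h' | h'
        · rw [exponentialPDF_of_neg h', Set.indicator_of_notMem (by simp [h'.ne])]
        · subst h'; simp [exponentialPDF_of_nonneg le_rfl, Set.indicator_of_mem rfl]
      rw [setLIntegral_congr_fun measurableSet_Ioc this]
      rw [lintegral_indicator (measurableSet_singleton 0)]
      simp
    simp [this]



def orthSet (n : ℕ) (c : Fin n → ℝ) : Set (Fin n → ℝ) :=
  {x | ∀ i : Fin n, c i * (∑ k ∈ Finset.univ.filter (fun k : Fin n => (k : ℕ) < (i : ℕ)), x k) < x i}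

lemma measurableSet_orthSet (n : ℕ) (c : Fin n → ℝ) : MeasurableSet (orthSet n c) := by
  have : orthSet n c = ⋂ i : Fin n,
      {x : Fin n → ℝ | c i * (∑ k ∈ Finset.univ.filter (fun k : Fin n => (k : ℕ) < (i : ℕ)), x k) < x i} := by
    ext x; simp [orthSet, Set.mem_iInter]
  rw [this]
  refine MeasurableSet.iInter fun i => measurableSet_lt ?_ (measurable_pi_apply i)
  exact (Finset.measurable_sum _ fun k _ => measurable_pi_apply k).const_mul _

lemma sum_filter_snoc {n : ℕ} (z : Fin n → ℝ) (y : ℝ) {m : ℕ} (hm : m ≤ n) :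
    ∑ k ∈ Finset.univ.filter (fun k : Fin (n+1) => (k : ℕ) < m), Fin.snoc z y k
      = ∑ k ∈ Finset.univ.filter (fun k : Fin n => (k : ℕ) < m), z k := by
  rw [Finset.sum_filter, Finset.sum_filter, Fin.sum_univ_castSucc]
  simp [Fin.snoc_castSucc, Fin.snoc_last, Fin.val_last, Nat.not_lt.mpr hm]

lemma sum_snoc {n : ℕ} (z : Fin n → ℝ) (y : ℝ) :
    ∑ k : Fin (n+1), Fin.snoc z y k = (∑ k, z k) + y := by
  rw [Fin.sum_univ_castSucc]
  simp [Fin.snoc_castSucc, Fin.snoc_last]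

lemma snoc_mem_orthSet_iff {n : ℕ} (c : Fin (n+1) → ℝ) (z : Fin n → ℝ) (y : ℝ) :
    Fin.snoc z y ∈ orthSet (n+1) c ↔
      (z ∈ orthSet n (fun i => c i.castSucc) ∧ c (Fin.last n) * (∑ k, z k) < y) := by
  constructor
  · intro h
    refine ⟨fun i => ?_, ?_⟩
    · have hi := h i.castSucc
      rwa [Fin.snoc_castSucc, show ((i.castSucc : Fin (n+1)) : ℕ) = (i : ℕ) from rfl,
        sum_filter_snoc z y (le_of_lt i.isLt)] at hi
    · have hl := h (Fin.last n)
      rw [Fin.snoc_last, show ((Fin.last n : Fin (n+1)) : ℕ) = n from rfl,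
        sum_filter_snoc z y le_rfl] at hl
      rwa [Finset.filter_true_of_mem (fun k _ => k.isLt)] at hl
  · rintro ⟨h1, h2⟩ i
    induction i using Fin.lastCases with
    | last =>
      rw [Fin.snoc_last, show ((Fin.last n : Fin (n+1)) : ℕ) = n from rfl,
        sum_filter_snoc z y le_rfl, Finset.filter_true_of_mem (fun k _ => k.isLt)]
      exact h2
    | cast i =>
      rw [Fin.snoc_castSucc, show ((i.castSucc : Fin (n+1)) : ℕ) = (i : ℕ) from rfl,
        sum_filter_snoc z y (le_of_lt i.isLt)]
      exact h1 i

lemma ae_pos {n : ℕ} {r : ℝ} (hr : 0 < r) :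
    ∀ᵐ z ∂(Measure.pi fun _ : Fin n => expMeasure r), ∀ i, 0 < z i := by
  haveI : IsProbabilityMeasure (expMeasure r) := isProbabilityMeasure_expMeasure hr
  have h1 : (Measure.pi fun _ : Fin n => expMeasure r) (Set.univ.pi fun _ => Ioi (0:ℝ)) = 1 := by
    rw [Measure.pi_pi]
    simp [expMeasure_Ioi hr]
  have hms : MeasurableSet (Set.univ.pi fun _ : Fin n => Ioi (0:ℝ)) :=
    MeasurableSet.univ_pi fun _ => measurableSet_Ioi
  have h2 := measure_compl hms (measure_ne_top (Measure.pi fun _ : Fin n => expMeasure r) _)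
  rw [h1, measure_univ, tsub_self] at h2
  rw [ae_iff]
  convert h2 using 2
  ext z
  simp [Set.mem_pi]

lemma lintegral_orthSet (n : ℕ) :
    ∀ (r s : ℝ), 0 < r → 0 ≤ s → ∀ c : Fin n → ℝ, (∀ i, 0 ≤ c i) →
    ∫⁻ x in orthSet n c, ENNReal.ofReal (Real.exp (-(s * ∑ k, x k)))
        ∂(Measure.pi fun _ : Fin n => expMeasure r)
      = ENNReal.ofReal ((r / (r + s)) ^ n * ∏ i : Fin n, ((1 + c i)⁻¹) ^ (i : ℕ)) := by
  induction n with
  | zero =>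
    intro r s hr hs c hc
    haveI : IsProbabilityMeasure (expMeasure r) := isProbabilityMeasure_expMeasure hr
    have h : orthSet 0 c = Set.univ := Set.eq_univ_of_forall fun x i => i.elim0
    rw [h, Measure.restrict_univ]
    simp
  | succ n IH =>
    intro r s hr hs c hc
    haveI : IsProbabilityMeasure (expMeasure r) := isProbabilityMeasure_expMeasure hr
    have hrs : 0 < r + s := by linarith
    set c' : Fin n → ℝ := fun i => c i.castSucc with hc'def
    set a : ℝ := c (Fin.last n) with hadef
    have ha0 : 0 ≤ a := hc _
    set s' : ℝ := s + (r + s) * a with hs'def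
    have hs'0 : 0 ≤ s' := by positivity
    set g : (Fin (n+1) → ℝ) → ℝ≥0∞ :=
      fun x => ENNReal.ofReal (Real.exp (-(s * ∑ k, x k))) with hgdef
    have hgmeas : Measurable g := by
      apply Measurable.ennreal_ofReal
      apply Real.measurable_exp.comp
      exact ((Finset.measurable_sum _ fun k _ => measurable_pi_apply k).const_mul s).neg
    set F : (Fin (n+1) → ℝ) → ℝ≥0∞ := (orthSet (n+1) c).indicator g with hFdef
    have hF : Measurable F := hgmeas.indicator (measurableSet_orthSet _ c)
    rw [← lintegral_indicator (measurableSet_orthSet _ c) g]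
    set e : ((Fin (n+1)) → ℝ) ≃ᵐ ℝ × (Fin n → ℝ) :=
      MeasurableEquiv.piFinSuccAbove (fun _ : Fin (n+1) => ℝ) (Fin.last n) with hedef
    have MP := measurePreserving_piFinSuccAbove (fun _ : Fin (n+1) => expMeasure r) (Fin.last n)
    have key := MP.lintegral_comp (f := fun p => F (e.symm p)) (hF.comp e.symm.measurable)
    have hee : ∀ a : Fin (n+1) → ℝ,
        e.symm ((MeasurableEquiv.piFinSuccAbove (fun _ : Fin (n+1) => ℝ) (Fin.last n)) a) = a :=
      fun a => e.symm_apply_apply a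
    simp only [hee] at key
    show ∫⁻ x, F x ∂(Measure.pi fun _ : Fin (n+1) => expMeasure r) = _
    rw [key]
    have hesymm : ∀ p : ℝ × (Fin n → ℝ), e.symm p = Fin.snoc p.2 p.1 := by
      intro p
      rw [hedef]
      simp [MeasurableEquiv.piFinSuccAbove_symm_apply, Fin.insertNth_last, Fin.snocEquiv]
    simp_rw [hesymm]
    have hsnocmeas : Measurable (fun p : ℝ × (Fin n → ℝ) => (Fin.snoc p.2 p.1 : Fin (n+1) → ℝ)) := by
      apply measurable_pi_iff.mpr
      intro j
      induction j using Fin.lastCases with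
      | last => simpa [Fin.snoc_last] using measurable_fst
      | cast i => simpa [Fin.snoc_castSucc, Function.comp_def] using (measurable_pi_apply i).comp measurable_snd
    rw [lintegral_prod_symm (fun b : ℝ × (Fin n → ℝ) => F (Fin.snoc b.2 b.1)) ((hF.comp hsnocmeas).aemeasurable)]
    have hinner : ∀ z : Fin n → ℝ, (∀ i, 0 < z i) →
        ∫⁻ y, F (Fin.snoc z y) ∂(expMeasure r)
          = ENNReal.ofReal (r / (r + s)) *
            Set.indicator (orthSet n c')
              (fun w => ENNReal.ofReal (Real.exp (-(s' * ∑ k, w k)))) z := by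
      intro z hz
      have hSz : 0 ≤ ∑ k, z k := Finset.sum_nonneg fun k _ => (hz k).le
      by_cases hzA : z ∈ orthSet n c'
      · have hmem : ∀ y, F (Fin.snoc z y) =
            Set.indicator (Ioi (a * ∑ k, z k))
              (fun y => ENNReal.ofReal (Real.exp (-(s * ((∑ k, z k) + y))))) y := by
          intro y
          by_cases hy : a * ∑ k, z k < y
          · rw [Set.indicator_of_mem (Set.mem_Ioi.mpr hy),
              hFdef, Set.indicator_of_mem ((snoc_mem_orthSet_iff c z y).mpr ⟨hzA, hy⟩), hgdef]
            simp only []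
            rw [sum_snoc]
          · rw [Set.indicator_of_notMem (by simpa using hy), hFdef, Set.indicator_of_notMem]
            intro hmem'
            exact hy ((snoc_mem_orthSet_iff c z y).mp hmem').2
        simp_rw [hmem]
        rw [lintegral_indicator measurableSet_Ioi]
        have hsplit : ∀ y : ℝ, ENNReal.ofReal (Real.exp (-(s * ((∑ k, z k) + y))))
            = ENNReal.ofReal (Real.exp (-(s * ∑ k, z k))) * ENNReal.ofReal (Real.exp (-(s * y))) := by
          intro y
          rw [← ENNReal.ofReal_mul (by positivity), ← Real.exp_add]
          ring_nf
        simp_rw [hsplit]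
        rw [lintegral_const_mul _ (by fun_prop)]
        rw [lintegral_exp_neg_mul_expMeasure hr hs (by positivity : (0:ℝ) ≤ a * ∑ k, z k)]
        rw [Set.indicator_of_mem hzA]
        rw [← ENNReal.ofReal_mul (by positivity), ← ENNReal.ofReal_mul (by positivity)]
        congr 1
        rw [show -(s' * ∑ k, z k) = -(s * ∑ k, z k) + -((r+s) * (a * ∑ k, z k)) from by
          rw [hs'def]; ring, Real.exp_add]
        ring
      · have hzero : ∀ y, F (Fin.snoc z y) = 0 := fun y =>
          Set.indicator_of_notMem (fun hmem' => hzA ((snoc_mem_orthSet_iff c z y).mp hmem').1) _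
        simp [hzero, Set.indicator_of_notMem hzA]
    rw [lintegral_congr_ae ((ae_pos hr).mono fun z hz => hinner z hz)]
    have hmeas2 : Measurable fun w : Fin n → ℝ => ENNReal.ofReal (Real.exp (-(s' * ∑ k, w k))) := by
      apply Measurable.ennreal_ofReal
      apply Real.measurable_exp.comp
      exact ((Finset.measurable_sum _ fun k _ => measurable_pi_apply k).const_mul s').neg
    rw [lintegral_const_mul _ (hmeas2.indicator (measurableSet_orthSet _ _)),
      lintegral_indicator (measurableSet_orthSet _ _),
      IH r s' hr hs'0 c' (fun i => hc _)]
    rw [← ENNReal.ofReal_mul (by positivity)]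
    congr 1
    have h1a : (0:ℝ) < 1 + a := by linarith
    have hrs' : r + s' = (r + s) * (1 + a) := by rw [hs'def]; ring
    have hdiv : r / (r + s') = r / (r + s) * (1 + a)⁻¹ := by
      rw [hrs', div_mul_eq_div_div, div_eq_mul_inv]
    rw [Fin.prod_univ_castSucc]
    simp only [Fin.coe_castSucc, Fin.val_last]
    rw [hdiv, mul_pow]
    ring

lemma log_ratio_iff {d : ℝ} (hd : 0 < d) (T u τ : ℝ) (hT : 0 < T) (hu : 0 < u) :
    (τ < (1/d) * Real.log (1 + u / T)) ↔ ((Real.exp (d * max τ 0) - 1) * T < u) := by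
  have h1 : (0:ℝ) < 1 + u / T := by positivity
  rcases le_or_gt τ 0 with hτ | hτ
  · apply iff_of_true
    · have hlog : 0 < Real.log (1 + u / T) :=
        Real.log_pos (by nlinarith [div_pos hu hT])
      exact lt_of_le_of_lt hτ (mul_pos (by positivity) hlog)
    · rw [max_eq_right hτ]
      simp [hu]
  · rw [max_eq_left hτ.le, one_div_mul_eq_div, lt_div_iff₀' hd, Real.lt_log_iff_exp_lt h1,
      add_comm (1:ℝ) (u/T), ← sub_lt_iff_lt_add, lt_div_iff₀ hT]

lemma map_phi (d ρ : ℝ) (hd : 0 < d) (hρ : 0 < ρ) (L : ℕ) (hL : 2 ≤ L) :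
    Measure.map (fun (x : Fin L → ℝ) (i : ↥(Set.Icc 2 L)) =>
        (1/d) * Real.log (1 + x ⟨(i:ℕ)-1, by obtain ⟨h1,h2⟩ := Set.mem_Icc.mp i.2; omega⟩ /
          ∑ k ∈ Finset.univ.filter (fun k : Fin L => (k:ℕ) < (i:ℕ)-1), x k))
      (Measure.pi fun _ : Fin L => expMeasure ρ)
    = Measure.pi (fun i : ↥(Set.Icc 2 L) => expMeasure ((((i:ℕ) - 1 : ℕ) : ℝ) * d)) := by
  classical
  haveI : IsProbabilityMeasure (expMeasure ρ) := isProbabilityMeasure_expMeasure hρ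
  have hratepos : ∀ i : ↥(Set.Icc 2 L), (0:ℝ) < (((i:ℕ) - 1 : ℕ) : ℝ) * d := by
    intro i
    obtain ⟨h1, h2⟩ := Set.mem_Icc.mp i.2
    have h3 : 1 ≤ (i:ℕ) - 1 := by omega
    have h4 : (1:ℝ) ≤ (((i:ℕ) - 1 : ℕ) : ℝ) := by exact_mod_cast h3
    nlinarith
  haveI hprob : ∀ i : ↥(Set.Icc 2 L),
      IsProbabilityMeasure (expMeasure ((((i:ℕ) - 1 : ℕ) : ℝ) * d)) :=
    fun i => isProbabilityMeasure_expMeasure (hratepos i)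
  set Φ : (Fin L → ℝ) → (↥(Set.Icc 2 L) → ℝ) := fun x i =>
      (1/d) * Real.log (1 + x ⟨(i:ℕ)-1, by obtain ⟨h1,h2⟩ := Set.mem_Icc.mp i.2; omega⟩ /
        ∑ k ∈ Finset.univ.filter (fun k : Fin L => (k:ℕ) < (i:ℕ)-1), x k) with hΦdef
  have hΦmeas : Measurable Φ := by
    apply measurable_pi_iff.mpr
    intro i
    apply Measurable.const_mul
    apply Real.measurable_log.comp
    apply Measurable.add measurable_const
    exact (measurable_pi_apply _).div (Finset.measurable_sum _ fun k _ => measurable_pi_apply k)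
  symm
  apply Measure.pi_eq_generateFrom (C := fun _ => Set.range Set.Ioi)
    (fun _ => (borel_eq_generateFrom_Ioi ℝ).symm) (fun _ => isPiSystem_Ioi)
  · intro i
    exact ⟨fun n => Set.Ioi (-(n:ℝ)), fun n => ⟨-(n:ℝ), rfl⟩,
      fun n => measure_lt_top _ _,
      Set.eq_univ_of_forall fun x => by
        obtain ⟨n, hn⟩ := exists_nat_gt (-x)
        exact Set.mem_iUnion.mpr ⟨n, by simpa using neg_lt_of_neg_lt hn⟩⟩
  · intro sets hsets
    choose t ht using hsets
    have hmsets : ∀ i, MeasurableSet (sets i) := fun i => (ht i) ▸ measurableSet_Ioi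
    rw [Measure.map_apply hΦmeas (MeasurableSet.univ_pi hmsets)]
    set cnat : ℕ → ℝ := fun m =>
      if h : 2 ≤ m + 1 ∧ m + 1 ≤ L then
        Real.exp (d * max (t ⟨m+1, Set.mem_Icc.mpr h⟩) 0) - 1 else 0 with hcnatdef
    have hexp1 : ∀ (m : ℕ) (h : 2 ≤ m + 1 ∧ m + 1 ≤ L),
        (1:ℝ) ≤ Real.exp (d * max (t ⟨m+1, Set.mem_Icc.mpr h⟩) 0) := by
      intro m h
      rw [← Real.exp_zero]
      apply Real.exp_le_exp.mpr
      positivity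
    have hcnonneg : ∀ m, 0 ≤ cnat m := by
      intro m
      rw [hcnatdef]
      dsimp only
      split_ifs with h
      · linarith [hexp1 m h]
      · exact le_rfl
    set c : Fin L → ℝ := fun k => cnat (k:ℕ) with hcdef
    have tcongr : ∀ (m : ℕ) (h : 2 ≤ m+1 ∧ m+1 ≤ L) (i : ↥(Set.Icc 2 L)), (i:ℕ) = m + 1 →
        t ⟨m+1, Set.mem_Icc.mpr h⟩ = t i := by
      intro m h i hi
      congr 1
      exact Subtype.ext hi.symm
    have hTpos : ∀ (x : Fin L → ℝ), (∀ j, 0 < x j) → ∀ (k : Fin L), 1 ≤ (k:ℕ) →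
        0 < ∑ j ∈ Finset.univ.filter (fun j : Fin L => (j:ℕ) < (k:ℕ)), x j := by
      intro x hx k hk
      apply Finset.sum_pos (fun j _ => hx j)
      exact ⟨⟨0, by omega⟩, Finset.mem_filter.mpr ⟨Finset.mem_univ _, hk⟩⟩
    have haeeq : Φ ⁻¹' (Set.univ.pi sets)
        =ᶠ[ae (Measure.pi fun _ : Fin L => expMeasure ρ)] orthSet L c := by
      rw [Filter.eventuallyEq_set]
      filter_upwards [ae_pos hρ] with x hx
      constructor
      · intro hm k
        by_cases h0 : (k:ℕ) = 0
        · have hck : c k = 0 := by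
            rw [hcdef, hcnatdef]
            dsimp only
            rw [dif_neg (by omega)]
          rw [hck, zero_mul]
          exact hx k
        · have hk1 : 1 ≤ (k:ℕ) := by omega
          set i : ↥(Set.Icc 2 L) := ⟨(k:ℕ)+1,
            Set.mem_Icc.mpr ⟨by omega, by have := k.isLt; omega⟩⟩ with hidef
          have hti : t i < Φ x i := by
            have h1 := hm i (Set.mem_univ i)
            rw [← ht i] at h1
            exact h1
          have hphieq : Φ x i = (1/d) * Real.log (1 + x k /
              ∑ j ∈ Finset.univ.filter (fun j : Fin L => (j:ℕ) < (k:ℕ)), x j) := rfl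
          rw [hphieq] at hti
          have hKey := (log_ratio_iff hd _ (x k) (t i) (hTpos x hx k hk1) (hx k)).mp hti
          have hck : c k = Real.exp (d * max (t i) 0) - 1 := by
            rw [hcdef, hcnatdef]
            dsimp only
            have hcond : 2 ≤ (k:ℕ) + 1 ∧ (k:ℕ) + 1 ≤ L := ⟨by omega, by have := k.isLt; omega⟩
            rw [dif_pos hcond, tcongr _ hcond i rfl]
          rw [hck]
          exact hKey
      · intro ho i
        obtain ⟨hi2, hiL⟩ := Set.mem_Icc.mp i.2
        have hk1 : 1 ≤ (i:ℕ) - 1 := by omega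
        set k : Fin L := ⟨(i:ℕ)-1, by omega⟩ with hkdef
        have h := ho k
        have hck : c k = Real.exp (d * max (t i) 0) - 1 := by
          rw [hcdef, hcnatdef]
          dsimp only
          have hcond : 2 ≤ ((i:ℕ)-1) + 1 ∧ ((i:ℕ)-1) + 1 ≤ L := ⟨by omega, by omega⟩
          rw [dif_pos hcond, tcongr _ hcond i (by omega)]
        rw [hck] at h
        intro _
        rw [← ht i]
        show t i < Φ x i
        have hphieq : Φ x i = (1/d) * Real.log (1 + x k /
            ∑ j ∈ Finset.univ.filter (fun j : Fin L => (j:ℕ) < (k:ℕ)), x j) := rfl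
        rw [hphieq]
        exact (log_ratio_iff hd _ (x k) (t i) (hTpos x hx k hk1) (hx k)).mpr h
    rw [measure_congr haeeq]
    have hG := lintegral_orthSet L ρ 0 hρ le_rfl c (fun k => hcnonneg _)
    have hone : ∀ x : Fin L → ℝ,
        ENNReal.ofReal (Real.exp (-((0:ℝ) * ∑ k, x k))) = 1 := by
      intro x; simp
    rw [setLIntegral_congr_fun (measurableSet_orthSet L c)
        (fun x _ => (hone x)), setLIntegral_one] at hG
    rw [hG]
    have hRHS : ∀ i : ↥(Set.Icc 2 L), expMeasure ((((i:ℕ) - 1 : ℕ) : ℝ) * d) (sets i)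
        = ENNReal.ofReal (Real.exp (-((((i:ℕ) - 1 : ℕ) : ℝ) * d * max (t i) 0))) := by
      intro i
      rw [← ht i, expMeasure_Ioi (hratepos i)]
    simp_rw [hRHS]
    rw [add_zero, div_self hρ.ne', one_pow, one_mul]
    have hprodreal : ∏ k : Fin L, ((1 + c k)⁻¹)^(k:ℕ)
        = ∏ i : ↥(Set.Icc 2 L), Real.exp (-((((i:ℕ) - 1 : ℕ) : ℝ) * d * max (t i) 0)) := by
      have : ∏ k : Fin L, ((1 + c k)⁻¹)^(k:ℕ)
          = ∏ m ∈ Finset.range L, ((1 + cnat m)⁻¹)^m :=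
        Fin.prod_univ_eq_prod_range (fun m => ((1 + cnat m)⁻¹)^m) L
      rw [this, ← Finset.prod_erase (Finset.range L)
        (f := fun m => ((1 + cnat m)⁻¹)^m) (a := 0) (pow_zero _)]
      apply Finset.prod_nbij'
        (i := fun m => if h : 2 ≤ m+1 ∧ m+1 ≤ L then (⟨m+1, Set.mem_Icc.mpr h⟩ : ↥(Set.Icc 2 L))
          else ⟨2, Set.mem_Icc.mpr ⟨le_rfl, hL⟩⟩)
        (j := fun i => (i:ℕ)-1)
      · intro m _; exact Finset.mem_univ _
      · intro i _
        obtain ⟨hi2, hiL⟩ := Set.mem_Icc.mp i.2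
        rw [Finset.mem_erase, Finset.mem_range]
        omega
      · intro m hm
        rw [Finset.mem_erase, Finset.mem_range] at hm
        rw [dif_pos ⟨by omega, by omega⟩]
        rfl
      · intro i _
        obtain ⟨hi2, hiL⟩ := Set.mem_Icc.mp i.2
        rw [dif_pos ⟨by omega, by omega⟩]
        exact Subtype.ext (show (i:ℕ)-1+1 = (i:ℕ) by omega)
      · intro m hm
        rw [Finset.mem_erase, Finset.mem_range] at hm
        have hcond : 2 ≤ m+1 ∧ m+1 ≤ L := ⟨by omega, by omega⟩
        rw [dif_pos hcond]
        have hcm : cnat m = Real.exp (d * max (t ⟨m+1, Set.mem_Icc.mpr hcond⟩) 0) - 1 := by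
          rw [hcnatdef]; dsimp only; rw [dif_pos hcond]
        rw [hcm]
        have hmm : (((m + 1 - 1 : ℕ)) : ℝ) = (m : ℕ) := by norm_num
        rw [show (1 : ℝ) + (Real.exp (d * max (t ⟨m+1, Set.mem_Icc.mpr hcond⟩) 0) - 1)
            = Real.exp (d * max (t ⟨m+1, Set.mem_Icc.mpr hcond⟩) 0) from by ring]
        rw [← Real.exp_neg, ← Real.exp_nat_mul]
        congr 1
        push_cast [hmm]
        ring
    rw [hprodreal, ENNReal.ofReal_prod_of_nonneg (fun i _ => (Real.exp_pos _).le)]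

lemma map_v_eq_pi {Ω : Type*} [MeasurableSpace Ω] (P : Measure Ω) [IsProbabilityMeasure P]
    {ρ : ℝ} (hρ : 0 < ρ) {L : ℕ} (v : Fin L → Ω → ℝ) (hvmeas : ∀ k, Measurable (v k))
    (hindep : iIndepFun v P)
    (hlaw : ∀ k, Measure.map (v k) P = expMeasure ρ) :
    Measure.map (fun ω k => v k ω) P = Measure.pi fun _ : Fin L => expMeasure ρ := by
  haveI : IsProbabilityMeasure (expMeasure ρ) := isProbabilityMeasure_expMeasure hρ
  symm
  apply Measure.pi_eq
  intro s hs
  rw [Measure.map_apply (measurable_pi_iff.mpr hvmeas) (MeasurableSet.univ_pi hs)]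
  have hpre : (fun ω k => v k ω) ⁻¹' (Set.univ.pi s) = ⋂ k ∈ Finset.univ, v k ⁻¹' s k := by
    ext ω; simp [Set.mem_pi]
  rw [hpre, hindep.measure_inter_preimage_eq_mul Finset.univ (fun k _ => hs k)]
  exact Finset.prod_congr rfl fun k _ => by
    rw [← Measure.map_apply (hvmeas k) (hs k), hlaw k]

end CrideAux


open CrideAux in
/-- Let `d > 0`, `ρ > 0`, `L ≥ 2`, and let `v 0, …, v (L-1)` be i.i.d. `Exponential(ρ)`
random variables (`v (l-1)` being the `l`-th shell volume, `l = 1, …, L`). For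
`2 ≤ l ≤ L` define `γ_l = (1/d)·log(1 + v_l / (v₁ + ⋯ + v_{l-1}))`. Then `γ₂, …, γ_L`
are jointly independent and `γ_l ~ Exponential((l-1)·d)`; i.e. their joint density
factorizes as `∏_{l=2}^{L} (l-1)·d·exp(−(l-1)·d·γ_l)` on `(0,∞)^{L-1}`. -/
theorem cride_log_ratios_independent_exponential
    {Ω : Type*} [MeasurableSpace Ω] (P : Measure Ω) [IsProbabilityMeasure P]
    (d ρ : ℝ) (hd : 0 < d) (hρ : 0 < ρ) (L : ℕ) (hL : 2 ≤ L)
    (v : Fin L → Ω → ℝ) (hvmeas : ∀ k, Measurable (v k))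
    (hindep : iIndepFun v P)
    (hlaw : ∀ k, Measure.map (v k) P = expMeasure ρ)
    (S : ℕ → Ω → ℝ)
    (hS : ∀ l ω, S l ω = ∑ k ∈ Finset.univ.filter (fun k : Fin L => (k : ℕ) < l), v k ω)
    (γ : ℕ → Ω → ℝ)
    (hγ : ∀ l, 2 ≤ l → ∀ hl : l ≤ L, ∀ ω,
      γ l ω = (1 / d) * Real.log (1 + v ⟨l - 1, by omega⟩ ω / S (l - 1) ω)) :
    iIndepFun (fun l : Set.Icc 2 L => γ (l : ℕ)) P ∧
    ∀ l : ℕ, 2 ≤ l → l ≤ L →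
      Measure.map (γ l) P = expMeasure ((l - 1 : ℕ) * d) := by
  classical
  have hSmeas : ∀ l, Measurable (S l) := by
    intro l
    have h : S l = fun ω => ∑ k ∈ Finset.univ.filter (fun k : Fin L => (k : ℕ) < l), v k ω :=
      funext fun ω => hS l ω
    rw [h]
    exact Finset.measurable_sum _ fun k _ => hvmeas k
  have hγmeas : ∀ l, 2 ≤ l → l ≤ L → Measurable (γ l) := by
    intro l h2 hl
    have h : γ l = fun ω => (1 / d) * Real.log (1 + v ⟨l - 1, by omega⟩ ω / S (l - 1) ω) :=
      funext fun ω => hγ l h2 hl ω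
    rw [h]
    exact (Real.measurable_log.comp
      (measurable_const.add ((hvmeas _).div (hSmeas _)))).const_mul _
  set Φ : (Fin L → ℝ) → (↥(Set.Icc 2 L) → ℝ) := fun x i =>
      (1/d) * Real.log (1 + x ⟨(i:ℕ)-1, by obtain ⟨h1,h2⟩ := Set.mem_Icc.mp i.2; omega⟩ /
        ∑ k ∈ Finset.univ.filter (fun k : Fin L => (k:ℕ) < (i:ℕ)-1), x k) with hΦdef
  have hΦmeas : Measurable Φ := by
    apply measurable_pi_iff.mpr
    intro i
    apply Measurable.const_mul
    apply Real.measurable_log.comp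
    apply Measurable.add measurable_const
    exact (measurable_pi_apply _).div (Finset.measurable_sum _ fun k _ => measurable_pi_apply k)
  have hΓeq : (fun ω (i : ↥(Set.Icc 2 L)) => γ (i:ℕ) ω) = Φ ∘ (fun ω k => v k ω) := by
    funext ω i
    obtain ⟨h2, hl⟩ := Set.mem_Icc.mp i.2
    rw [Function.comp_apply, hγ (i:ℕ) h2 hl ω, hS ((i:ℕ)-1) ω]
  have hratepos : ∀ i : ↥(Set.Icc 2 L), (0:ℝ) < (((i:ℕ) - 1 : ℕ) : ℝ) * d := by
    intro i
    obtain ⟨h1, h2⟩ := Set.mem_Icc.mp i.2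
    have h3 : 1 ≤ (i:ℕ) - 1 := by omega
    have h4 : (1:ℝ) ≤ (((i:ℕ) - 1 : ℕ) : ℝ) := by exact_mod_cast h3
    nlinarith
  haveI hprob : ∀ i : ↥(Set.Icc 2 L),
      IsProbabilityMeasure (expMeasure ((((i:ℕ) - 1 : ℕ) : ℝ) * d)) :=
    fun i => isProbabilityMeasure_expMeasure (hratepos i)
  have hjoint : Measure.map (fun ω (i : ↥(Set.Icc 2 L)) => γ (i:ℕ) ω) P
      = Measure.pi (fun i : ↥(Set.Icc 2 L) => expMeasure ((((i:ℕ) - 1 : ℕ) : ℝ) * d)) := by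
    rw [hΓeq, ← Measure.map_map hΦmeas (measurable_pi_iff.mpr hvmeas),
      map_v_eq_pi P hρ v hvmeas hindep hlaw]
    exact map_phi d ρ hd hρ L hL
  have hΓmeas : Measurable (fun ω (i : ↥(Set.Icc 2 L)) => γ (i:ℕ) ω) :=
    measurable_pi_iff.mpr fun i => by
      obtain ⟨h2, hl⟩ := Set.mem_Icc.mp i.2
      exact hγmeas _ h2 hl
  have hcyl : ∀ (Sf : Finset ↥(Set.Icc 2 L)) (sets : ↥(Set.Icc 2 L) → Set ℝ),
      (∀ i ∈ Sf, MeasurableSet (sets i)) →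
      P (⋂ i ∈ Sf, (fun ω => γ (i:ℕ) ω) ⁻¹' sets i)
        = ∏ i ∈ Sf, expMeasure ((((i:ℕ) - 1 : ℕ) : ℝ) * d) (sets i) := by
    intro Sf sets hsets
    have hpre : (⋂ i ∈ Sf, (fun ω => γ (i:ℕ) ω) ⁻¹' sets i)
        = (fun ω (i : ↥(Set.Icc 2 L)) => γ (i:ℕ) ω) ⁻¹'
          (Set.univ.pi fun i => if i ∈ Sf then sets i else Set.univ) := by
      ext ω
      simp only [Set.mem_iInter, Set.mem_preimage, Set.mem_pi, Set.mem_univ, true_implies]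
      constructor
      · intro h i
        split_ifs with hi
        exacts [h i hi, trivial]
      · intro h i hi
        have := h i
        rwa [if_pos hi] at this
    rw [hpre, ← Measure.map_apply hΓmeas (MeasurableSet.univ_pi fun i => by
        split_ifs with hi
        exacts [hsets i hi, MeasurableSet.univ]), hjoint, Measure.pi_pi]
    have hfac : ∀ i : ↥(Set.Icc 2 L),
        expMeasure ((((i:ℕ) - 1 : ℕ) : ℝ) * d) (if i ∈ Sf then sets i else Set.univ)
          = if i ∈ Sf then expMeasure ((((i:ℕ) - 1 : ℕ) : ℝ) * d) (sets i) else 1 := by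
      intro i
      split_ifs
      · rfl
      · exact measure_univ
    simp_rw [hfac]
    rw [Finset.prod_ite_mem Finset.univ Sf
      (fun i => expMeasure ((((i:ℕ) - 1 : ℕ) : ℝ) * d) (sets i)), Finset.univ_inter]
  constructor
  · rw [iIndepFun_iff_measure_inter_preimage_eq_mul]
    intro Sf sets hsets
    rw [hcyl Sf sets hsets]
    refine Finset.prod_congr rfl fun i hi => ?_
    have h := hcyl {i} sets (fun j hj => by rw [Finset.mem_singleton.mp hj]; exact hsets i hi)
    rw [Finset.prod_singleton] at h
    simp only [Finset.mem_singleton, Set.iInter_iInter_eq_left] at h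
    exact h.symm
  · intro l h2 hl
    have hmem : l ∈ Set.Icc 2 L := Set.mem_Icc.mpr ⟨h2, hl⟩
    apply Measure.ext
    intro A hA
    rw [Measure.map_apply (hγmeas l h2 hl) hA]
    have h := hcyl {⟨l, hmem⟩} (fun _ => A) (fun _ _ => hA)
    rw [Finset.prod_singleton] at h
    simp only [Finset.mem_singleton, Set.iInter_iInter_eq_left] at h
    exact h
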